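/- With J-cal(x) = Σ_{n≥0} (-1)^{⌈n/2⌉} x^n q^{n(n-1)/2} / (q²;q²)_{⌊n/2⌋}, one has (1-2x)·J-cal(-xq) = 2·J-cal(x) - J-cal(xq). -/

import Mathlib

open PowerSeries

noncomputable section
namespace FC

/-- The field `ℚ(q)` of rational functions in `q`. -/
abbrev K : Type := RatFunc ℚ

/-- The variable `q`. -/
def q : K := RatFunc.X

/-- `(q²;q²)_m = ∏_{i=1}^{m} (1 - q^{2i})`. -/
def poch2 (m : ℕ) : K := ∏ i ∈ Finset.range m, (1 - q ^ (2 * (i + 1)))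

/-- `𝒥(x) = Σ_{n≥0} (-1)^{⌈n/2⌉} x^n q^{C(n,2)} / (q²;q²)_{⌊n/2⌋}`. -/
def Jcal : PowerSeries K :=
  PowerSeries.mk fun n => (-1 : K) ^ ((n + 1) / 2) * q ^ n.choose 2 / poch2 (n / 2)

/-- `𝒦(x) = Σ_{n≥0} x^n q^{n(n+1)/2} Σ_{k=0}^{⌊n/2⌋} (-1)^k/(q²;q²)_k`. -/
def Kcal : PowerSeries K :=
  PowerSeries.mk fun n =>
    q ^ (n * (n + 1) / 2) * ∑ k ∈ Finset.range (n / 2 + 1), (-1 : K) ^ k / poch2 k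

def c (n : ℕ) : K := (-1 : K) ^ ((n + 1) / 2) * q ^ n.choose 2 / poch2 (n / 2)

lemma q_pow_ne_one (m : ℕ) (hm : m ≠ 0) : q ^ m ≠ 1 := by
  intro h
  have : (Polynomial.X : Polynomial ℚ) ^ m = 1 := by
    apply RatFunc.algebraMap_injective ℚ
    simpa [q, map_pow] using h
  have := congrArg Polynomial.natDegree this
  simp [Polynomial.natDegree_X_pow] at this
  exact hm this

lemma poch2_ne_zero (m : ℕ) : poch2 m ≠ 0 := by
  apply Finset.prod_ne_zero_iff.2
  intro i _
  have := q_pow_ne_one (2 * (i + 1)) (by omega)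
  intro h
  exact this (by linear_combination -h)

lemma choose_succ (n : ℕ) : (n + 1).choose 2 = n + n.choose 2 := by
  rw [Nat.choose_succ_succ, Nat.choose_one_right]

lemma c_odd (m : ℕ) : c (2 * m + 1) = -(q ^ (2 * m)) * c (2 * m) := by
  have h1 : (2 * m + 1).choose 2 = 2 * m + (2 * m).choose 2 := choose_succ (2 * m)
  have h2 : (2 * m + 1 + 1) / 2 = m + 1 := by omega
  have h3 : (2 * m + 1) / 2 = m := by omega
  have h5 : (2 * m) / 2 = m := by omega
  simp only [c, h1, h2, h3, h5, pow_add, pow_succ]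
  ring

lemma c_even (m : ℕ) : q ^ (2 * m + 1) * c (2 * m + 1) = (1 - q ^ (2 * m + 2)) * c (2 * m + 2) := by
  have h1 : (2 * m + 2).choose 2 = (2 * m + 1) + (2 * m + 1).choose 2 := choose_succ (2 * m + 1)
  have h2 : (2 * m + 1 + 1) / 2 = m + 1 := by omega
  have h3 : (2 * m + 1) / 2 = m := by omega
  have h4 : (2 * m + 2 + 1) / 2 = m + 1 := by omega
  have h5 : (2 * m + 2) / 2 = m + 1 := by omega
  have hp : poch2 (m + 1) = poch2 m * (1 - q ^ (2 * m + 2)) := by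
    rw [poch2, Finset.prod_range_succ, ← poch2]; ring_nf
  have hne : (1 : K) - q ^ (2 * m + 2) ≠ 0 := by
    intro h
    exact q_pow_ne_one (2 * m + 2) (by omega) (by linear_combination -h)
  have key : ∀ a : K, (1 - q ^ (2 * m + 2)) * (a / (poch2 m * (1 - q ^ (2 * m + 2)))) = a / poch2 m := by
    intro a
    rw [mul_comm (poch2 m), ← div_div, div_right_comm, mul_div_cancel₀ _ hne]
  simp only [c, h1, h2, h3, h4, h5]
  rw [hp, key, pow_add]
  ring

lemma coeff_Jcal (n : ℕ) : coeff n Jcal = c n := coeff_mk n _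

lemma c_rec (k : ℕ) :
    (-q) ^ (k + 1) * c (k + 1) - 2 * ((-q) ^ k * c k) = 2 * c (k + 1) - q ^ (k + 1) * c (k + 1) := by
  rcases Nat.even_or_odd k with ⟨m, hm⟩ | ⟨m, hm⟩
  · have hk : k = 2 * m := by omega
    subst hk
    rw [c_odd m, show (-q) ^ (2 * m + 1) = -((-1:K) ^ (2*m) * q ^ (2*m+1)) by
          rw [neg_pow]; ring,
        show (-q) ^ (2 * m) = (-1:K) ^ (2*m) * q ^ (2*m) from neg_pow q (2*m),
        Even.neg_one_pow ⟨m, by ring⟩]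
    rw [pow_succ]
    ring
  · have hk : k = 2 * m + 1 := by omega
    subst hk
    have he := c_even m
    simp only [show 2*m+1+1 = 2*m+2 from by omega]
    rw [show (-q) ^ (2 * m + 2) = q ^ (2*m+2) by
          rw [neg_pow, Even.neg_one_pow ⟨m+1, by ring⟩]; ring_nf,
        show (-q) ^ (2 * m + 1) = -q ^ (2*m+1) by
          rw [neg_pow, Odd.neg_one_pow ⟨m, by ring⟩]; ring]
    linear_combination 2 * he

/-- `(1-2x)·𝒥(-xq) = 2·𝒥(x) - 𝒥(xq)`. -/
theorem stmt8 :
    (1 - 2 * PowerSeries.X) * rescale (-q) Jcal = 2 * Jcal - rescale q Jcal := by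
  have h2 : (2 : PowerSeries K) = C (R := K) 2 := (map_ofNat (C (R := K)) 2).symm
  ext n
  rw [sub_mul, one_mul, h2, mul_assoc, map_sub, map_sub, coeff_C_mul, coeff_C_mul,
    coeff_rescale, coeff_rescale, coeff_Jcal]
  cases n with
  | zero =>
    simp [coeff_Jcal]
    ring
  | succ k =>
    rw [coeff_succ_X_mul, coeff_rescale, coeff_Jcal]
    exact c_rec k


end FC
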